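/- For every real θ, exp(−(iθ/2)·(Z⊗Y))·|++⟩ = exp(−(iθ/2)·(Y⊗Z))·|++⟩, and for every real τ there exist a real angle θ and a real scalar λ > 0 such that exp(−τ·(Z⊗Z))·|++⟩ = λ·exp(−(iθ/2)·(Z⊗Y))·|++⟩; i.e. the imaginary-time evolution of |++⟩ under the Hamiltonian Z⊗Z coincides, up to positive normalization, with a single ZY-rotation (equivalently YZ-rotation) of |++⟩. -/

import Mathlib

set_option maxHeartbeats 1000000

open Matrix Kronecker

noncomputable section

def PauliY : Matrix (Fin 2) (Fin 2) ℂ := !![0, -Complex.I; Complex.I, 0]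
def PauliZ : Matrix (Fin 2) (Fin 2) ℂ := !![1, 0; 0, -1]

/-- `|++⟩ = |+⟩ ⊗ |+⟩`, the vector in `ℂ⁴` with all coordinates `1/2`. -/
def plus2 : Fin 2 × Fin 2 → ℂ := fun _ => (1 / 2 : ℂ)

lemma exp_smul_idem {𝔸 : Type*} [NormedRing 𝔸] [NormedAlgebra ℂ 𝔸] [CompleteSpace 𝔸]
    (P : 𝔸) (hP : P * P = P) (t : ℂ) :
    NormedSpace.exp (t • P) = 1 + (Complex.exp t - 1) • P := by
  have hpow : ∀ n : ℕ, P ^ (n + 1) = P := by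
    intro n; induction n with
    | zero => simp
    | succ k ih => rw [pow_succ, ih, hP]
  have hc : Summable (fun n : ℕ => ((n.factorial : ℂ))⁻¹ * t ^ n) := by
    simpa [smul_eq_mul] using NormedSpace.expSeries_summable' (𝕂 := ℂ) t
  have hexp : Complex.exp t = ∑' n : ℕ, ((n.factorial : ℂ))⁻¹ * t ^ n := by
    rw [Complex.exp_eq_exp_ℂ, NormedSpace.exp_eq_tsum (𝕂 := ℂ)]
    simp [smul_eq_mul]
  have hf : Summable (fun n : ℕ => (((n.factorial : ℂ))⁻¹ * t ^ n) • P ^ n) := by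
    refine (NormedSpace.expSeries_summable' (𝕂 := ℂ) (t • P)).congr fun n => ?_
    rw [smul_pow, smul_smul]
  rw [NormedSpace.exp_eq_tsum (𝕂 := ℂ)]
  have h1 : (∑' n : ℕ, ((n.factorial : ℂ))⁻¹ • (t • P) ^ n)
      = ∑' n : ℕ, (((n.factorial : ℂ))⁻¹ * t ^ n) • P ^ n := by
    congr 1; funext n; rw [smul_pow, smul_smul]
  simp only []
  rw [h1, Summable.tsum_eq_zero_add hf]
  have h2 : (fun n : ℕ => (((n + 1).factorial : ℂ))⁻¹ * t ^ (n + 1)) = fun n =>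
      (((n + 1).factorial : ℂ))⁻¹ * t ^ (n + 1) := rfl
  have h3 : (∑' n : ℕ, ((((n + 1).factorial : ℂ))⁻¹ * t ^ (n + 1)) • P ^ (n + 1))
      = (∑' n : ℕ, (((n + 1).factorial : ℂ))⁻¹ * t ^ (n + 1)) • P := by
    simp only [hpow]
    have hs : Summable (fun n : ℕ => (((n + 1).factorial : ℂ))⁻¹ * t ^ (n + 1)) :=
      (summable_nat_add_iff (f := fun n : ℕ => ((n.factorial : ℂ))⁻¹ * t ^ n) 1).2 hc
    exact Summable.tsum_smul_const hs P
  have h4 : (∑' n : ℕ, (((n + 1).factorial : ℂ))⁻¹ * t ^ (n + 1)) = Complex.exp t - 1 := by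
    rw [hexp, Summable.tsum_eq_zero_add hc]; simp
  simp only [h3, h4]
  simp

lemma exp_smul_invol {𝔸 : Type*} [NormedRing 𝔸] [NormedAlgebra ℂ 𝔸] [CompleteSpace 𝔸]
    (A : 𝔸) (hA : A * A = 1) (c : ℂ) :
    NormedSpace.exp (c • A) = Complex.cosh c • 1 + Complex.sinh c • A := by
  set P : 𝔸 := (2⁻¹ : ℂ) • (1 + A) with hPdef
  have hP : P * P = P := by
    have hXX : (1 + A) * (1 + A) = (2 : ℂ) • (1 + A) := by
      rw [mul_add, add_mul, add_mul, hA]; simp only [one_mul, mul_one]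
      module
    rw [hPdef, smul_mul_assoc, mul_smul_comm, hXX, smul_smul, smul_smul]
    norm_num
  have hsplit : c • A = (2 * c) • P + (-c) • (1 : 𝔸) := by
    rw [hPdef, smul_smul, smul_add]
    rw [show (2 * c) * 2⁻¹ = c by ring, neg_smul]
    abel
  have hcomm : Commute ((2 * c) • P) ((-c) • (1 : 𝔸)) :=
    ((Commute.one_right P).smul_left _).smul_right _
  letI : NormedAlgebra ℚ 𝔸 := .restrictScalars ℚ ℂ 𝔸
  rw [hsplit, NormedSpace.exp_add_of_commute hcomm,
    exp_smul_idem P hP, exp_smul_idem (1 : 𝔸) (one_mul 1) (-c)]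
  have hmul : Complex.exp (2 * c) * Complex.exp (-c) = Complex.exp c := by
    rw [← Complex.exp_add]; congr 1; ring
  have h1 : Complex.cosh c
      = Complex.exp (-c) + (Complex.exp (2 * c) - 1) * Complex.exp (-c) * 2⁻¹ := by
    rw [Complex.cosh]; linear_combination (-(2⁻¹ : ℂ)) * hmul
  have h2 : Complex.sinh c = (Complex.exp (2 * c) - 1) * Complex.exp (-c) * 2⁻¹ := by
    rw [Complex.sinh]; linear_combination (-(2⁻¹ : ℂ)) * hmul
  rw [h1, h2, hPdef]
  rw [show (Complex.exp (-c) - 1) • (1:𝔸) = Complex.exp (-c) • (1:𝔸) - (1:𝔸) by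
    rw [sub_smul, one_smul]]
  simp only [mul_add, add_mul, mul_sub, sub_mul, mul_one, one_mul, smul_mul_assoc,
    mul_smul_comm, smul_smul, smul_add, smul_sub, sub_smul, add_smul]
  module

lemma exp_invol_mat (A : Matrix (Fin 2 × Fin 2) (Fin 2 × Fin 2) ℂ) (hA : A * A = 1) (c : ℂ) :
    NormedSpace.exp (c • A) = Complex.cosh c • 1 + Complex.sinh c • A := by
  letI : SeminormedRing (Matrix (Fin 2 × Fin 2) (Fin 2 × Fin 2) ℂ) := Matrix.linftyOpSemiNormedRing
  letI : NormedRing (Matrix (Fin 2 × Fin 2) (Fin 2 × Fin 2) ℂ) := Matrix.linftyOpNormedRing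
  letI : NormedAlgebra ℂ (Matrix (Fin 2 × Fin 2) (Fin 2 × Fin 2) ℂ) := Matrix.linftyOpNormedAlgebra
  exact exp_smul_invol A hA c

lemma vZZ : (PauliZ ⊗ₖ PauliZ) *ᵥ plus2
    = fun p => (if p.1 = p.2 then (1 : ℂ) else -1) / 2 := by
  funext x
  obtain ⟨i, j⟩ := x
  fin_cases i <;> fin_cases j <;>
    simp [Matrix.mulVec, dotProduct, Fintype.sum_prod_type, Fin.sum_univ_succ,
      Matrix.kroneckerMap_apply, PauliZ, plus2] <;> ring

lemma vZY : (PauliZ ⊗ₖ PauliY) *ᵥ plus2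
    = fun p => (if p.1 = p.2 then -Complex.I else Complex.I) / 2 := by
  funext x
  obtain ⟨i, j⟩ := x
  fin_cases i <;> fin_cases j <;>
    simp [Matrix.mulVec, dotProduct, Fintype.sum_prod_type, Fin.sum_univ_succ,
      Matrix.kroneckerMap_apply, PauliZ, PauliY, plus2] <;> ring

/-- `exp(−(iθ/2)·Z⊗Y)|++⟩ = exp(−(iθ/2)·Y⊗Z)|++⟩` for all real `θ`, and
the imaginary-time evolution of `|++⟩` under `Z⊗Z` is, up to positive normalization, a single
ZY-rotation of `|++⟩`. -/
theorem imaginary_time_ZZ_eq_ZY_rotation :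
    (∀ θ : ℝ,
        NormedSpace.exp ((-Complex.I * ((θ : ℂ) / 2)) • (PauliZ ⊗ₖ PauliY)) *ᵥ plus2
          = NormedSpace.exp ((-Complex.I * ((θ : ℂ) / 2)) • (PauliY ⊗ₖ PauliZ)) *ᵥ plus2) ∧
    (∀ τ : ℝ, ∃ (θ lam : ℝ), 0 < lam ∧
        NormedSpace.exp ((-(τ : ℂ)) • (PauliZ ⊗ₖ PauliZ)) *ᵥ plus2
          = (lam : ℂ) •
              (NormedSpace.exp ((-Complex.I * ((θ : ℂ) / 2)) • (PauliZ ⊗ₖ PauliY)) *ᵥ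
                plus2)) := by
  constructor
  · intro θ
    have hY2 : PauliY * PauliY = 1 := by
      ext i j
      fin_cases i <;> fin_cases j <;>
        simp [PauliY, Matrix.mul_apply, Fin.sum_univ_succ, Matrix.one_apply, Complex.I_mul_I]
    have hZ2 : PauliZ * PauliZ = 1 := by
      ext i j
      fin_cases i <;> fin_cases j <;>
        simp [PauliZ, Matrix.mul_apply, Fin.sum_univ_succ, Matrix.one_apply]
    have hZY : (PauliZ ⊗ₖ PauliY) * (PauliZ ⊗ₖ PauliY) = 1 := by
      rw [← Matrix.mul_kronecker_mul, hZ2, hY2, Matrix.one_kronecker_one]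
    have hYZ : (PauliY ⊗ₖ PauliZ) * (PauliY ⊗ₖ PauliZ) = 1 := by
      rw [← Matrix.mul_kronecker_mul, hZ2, hY2, Matrix.one_kronecker_one]
    have hvZY : (PauliZ ⊗ₖ PauliY) *ᵥ plus2 = (PauliY ⊗ₖ PauliZ) *ᵥ plus2 := by
      funext x
      obtain ⟨i, j⟩ := x
      fin_cases i <;> fin_cases j <;>
        simp [Matrix.mulVec, dotProduct, Fintype.sum_prod_type, Fin.sum_univ_succ,
          Matrix.kroneckerMap_apply, PauliY, PauliZ, plus2]
    rw [exp_invol_mat _ hZY, exp_invol_mat _ hYZ]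
    simp only [Matrix.add_mulVec, Matrix.smul_mulVec, hvZY]
  · intro τ
    have hY2 : PauliY * PauliY = 1 := by
      ext i j
      fin_cases i <;> fin_cases j <;>
        simp [PauliY, Matrix.mul_apply, Fin.sum_univ_succ, Matrix.one_apply, Complex.I_mul_I]
    have hZ2 : PauliZ * PauliZ = 1 := by
      ext i j
      fin_cases i <;> fin_cases j <;>
        simp [PauliZ, Matrix.mul_apply, Fin.sum_univ_succ, Matrix.one_apply]
    have hZY : (PauliZ ⊗ₖ PauliY) * (PauliZ ⊗ₖ PauliY) = 1 := by
      rw [← Matrix.mul_kronecker_mul, hZ2, hY2, Matrix.one_kronecker_one]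
    have hZZ : (PauliZ ⊗ₖ PauliZ) * (PauliZ ⊗ₖ PauliZ) = 1 := by
      rw [← Matrix.mul_kronecker_mul, hZ2, Matrix.one_kronecker_one]
    set h := Real.arctan (Real.tanh τ) with hh
    set s := Real.sqrt (1 + Real.tanh τ ^ 2) with hs
    have hs0 : 0 < s := Real.sqrt_pos.2 (by positivity)
    refine ⟨2 * h, Real.cosh τ * s, by positivity, ?_⟩
    have hcos : (Real.cosh τ * s) * Real.cos h = Real.cosh τ := by
      rw [hh, Real.cos_arctan, hs]
      field_simp
    have htanh : Real.cosh τ * Real.tanh τ = Real.sinh τ := by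
      rw [Real.tanh_eq_sinh_div_cosh]
      field_simp [(Real.cosh_pos (x := τ)).ne']
    have hsin : (Real.cosh τ * s) * Real.sin h = Real.sinh τ := by
      rw [hh, Real.sin_arctan, ← hs]
      have hrw : Real.cosh τ * s * (Real.tanh τ / s) = Real.cosh τ * Real.tanh τ := by
        field_simp
      rw [hrw, htanh]
    rw [exp_invol_mat _ hZZ, exp_invol_mat _ hZY]
    have e1 : Complex.cosh (-(τ : ℂ)) = (Real.cosh τ : ℂ) := by
      rw [Complex.cosh_neg, Complex.ofReal_cosh]
    have e2 : Complex.sinh (-(τ : ℂ)) = -(Real.sinh τ : ℂ) := by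
      rw [Complex.sinh_neg, Complex.ofReal_sinh]
    have e3 : Complex.cosh (-Complex.I * (((2 * h : ℝ) : ℂ) / 2)) = (Real.cos h : ℂ) := by
      rw [show (-Complex.I * (((2 * h : ℝ) : ℂ) / 2)) = (-(h : ℂ)) * Complex.I by push_cast; ring,
        Complex.cosh_mul_I, Complex.cos_neg, Complex.ofReal_cos]
    have e4 : Complex.sinh (-Complex.I * (((2 * h : ℝ) : ℂ) / 2))
        = -(Real.sin h : ℂ) * Complex.I := by
      rw [show (-Complex.I * (((2 * h : ℝ) : ℂ) / 2)) = (-(h : ℂ)) * Complex.I by push_cast; ring,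
        Complex.sinh_mul_I, Complex.sin_neg, Complex.ofReal_sin]
    have hcosC : Complex.cosh (τ : ℂ) * (s : ℂ) * Complex.cos (h : ℂ) = Complex.cosh (τ : ℂ) := by
      exact_mod_cast hcos
    have hsinC : Complex.cosh (τ : ℂ) * (s : ℂ) * Complex.sin (h : ℂ) = Complex.sinh (τ : ℂ) := by
      exact_mod_cast hsin
    simp only [Matrix.add_mulVec, Matrix.smul_mulVec, Matrix.one_mulVec, vZZ, vZY,
      e1, e2, e3, e4]
    funext p
    obtain ⟨i, j⟩ := p
    have hI2 : Complex.I ^ 2 = -1 := Complex.I_sq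
    fin_cases i <;> fin_cases j <;> simp [plus2] <;>
      first
      | linear_combination (-(1 / 2 : ℂ)) * hcosC - (Complex.I ^ 2 / 2) * hsinC
          - (Complex.sinh (τ : ℂ) / 2) * hI2
      | linear_combination (-(1 / 2 : ℂ)) * hcosC + (Complex.I ^ 2 / 2) * hsinC
          + (Complex.sinh (τ : ℂ) / 2) * hI2


end
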